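/- Termination bound: in the value iteration W_0 = G, W_{n+1} = P(W_n) over finite X with g taking values in a fixed finite set of nonnegative reals (or more simply, with g strictly positive below by c > 0 and G bounded on its finite part), the number of iterations n at which W_{n+1} ≠ W_n is finite, and if additionally each strict decrease W_{n+1}(x) < W_n(x) requires W_{n+1}(x) to equal Q(W_n, x) which is attained via at least one extra transition from the previous witnessing paths, then W_{|X|} = W_{|X|+1}. -/

import Mathlib

set_option linter.unusedSectionVars false

noncomputable def Pop {X U : Type*} (F : X → U → Set X) (G : X → EReal)
    (g : X → X → U → EReal) (W : X → EReal) (x : X) : EReal :=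
  min (G x) (⨅ u : U, ⨆ y ∈ F x u, g x y u + W y)

section Aux

variable {X U : Type*} [Fintype X] [Fintype U] [Nonempty X] [Nonempty U]
    (F : X → U → Set X) (G : X → EReal) (c : ℝ)
    (g : X → X → U → EReal)

lemma pop_mono {V V' : X → EReal} (h : ∀ x, V x ≤ V' x) (x : X) :
    Pop F G g V x ≤ Pop F G g V' x := by
  refine min_le_min le_rfl (iInf_mono fun u => iSup_mono fun y => iSup_mono fun hy => ?_)
  exact add_le_add_right (h y) _

lemma pop_iter_antitone_succ (n : ℕ) :
    ∀ x, (Pop F G g)^[n + 1] G x ≤ (Pop F G g)^[n] G x := by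
  induction n with
  | zero => intro x; simpa [Pop] using min_le_left _ _
  | succ n ih =>
    intro x
    have h := pop_mono F G g ih x
    rw [← Function.iterate_succ_apply' (Pop F G g), ← Function.iterate_succ_apply' (Pop F G g)] at h
    exact h

lemma pop_iter_antitone {m n : ℕ} (h : m ≤ n) (x : X) :
    (Pop F G g)^[n] G x ≤ (Pop F G g)^[m] G x := by
  induction n with
  | zero => simp_all
  | succ n ih =>
    rcases Nat.lt_or_ge m (n + 1) with hm | hm
    · exact (pop_iter_antitone_succ F G g n x).trans (ih (by omega))
    · have : m = n + 1 := le_antisymm h hm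
      simp [this]

/-- A strict decrease at step n+2 at x forces a strict decrease at step n+1
at some state y, with a cost gap of at least c. -/
lemma pop_step (hg : ∀ x y u, (c : EReal) ≤ g x y u) (n : ℕ) (x : X)
    (hx : (Pop F G g)^[n + 2] G x < (Pop F G g)^[n + 1] G x) :
    ∃ y, (Pop F G g)^[n + 1] G y < (Pop F G g)^[n] G y ∧
      (c : EReal) + (Pop F G g)^[n + 1] G y ≤ (Pop F G g)^[n + 2] G x := by
  set P := Pop F G g with hP
  have h2 : P^[n + 2] G x = min (G x) (⨅ u : U, ⨆ y ∈ F x u, g x y u + P^[n + 1] G y) := by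
    rw [Function.iterate_succ_apply' P (n + 1)]; rfl
  set Qv : EReal := ⨅ u : U, ⨆ y ∈ F x u, g x y u + P^[n + 1] G y with hQv
  have hle : P^[n + 1] G x ≤ G x := by
    simpa using pop_iter_antitone F G g (Nat.zero_le (n + 1)) x
  have hQlt : Qv < G x := by
    by_contra hcon
    push_neg at hcon
    have : P^[n + 2] G x = G x := by rw [h2, min_eq_left hcon]
    exact absurd (this ▸ hx) (not_lt.2 hle)
  have h2' : P^[n + 2] G x = Qv := by rw [h2, min_eq_right hQlt.le]
  obtain ⟨u, hu⟩ := Finite.exists_min (fun u : U => ⨆ y ∈ F x u, g x y u + P^[n + 1] G y)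
  have hQu : Qv = ⨆ y ∈ F x u, g x y u + P^[n + 1] G y :=
    le_antisymm (iInf_le _ u) (le_iInf hu)
  by_cases hy : ∃ y ∈ F x u, P^[n + 1] G y < P^[n] G y
  · obtain ⟨y, hyF, hylt⟩ := hy
    refine ⟨y, hylt, ?_⟩
    have h1 : g x y u + P^[n + 1] G y ≤ Qv := by
      rw [hQu]
      exact le_iSup₂ (f := fun z (_ : z ∈ F x u) => g x z u + P^[n + 1] G z) y hyF
    have h0 : (c : EReal) + P^[n + 1] G y ≤ g x y u + P^[n + 1] G y :=
      add_le_add_left (hg x y u) _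
    rw [h2']
    exact h0.trans h1
  · exfalso
    push_neg at hy
    have heq : ∀ y ∈ F x u, P^[n + 1] G y = P^[n] G y := fun y hyF =>
      le_antisymm (pop_iter_antitone_succ F G g n y) (hy y hyF)
    have hsup : (⨆ y ∈ F x u, g x y u + P^[n + 1] G y) = ⨆ y ∈ F x u, g x y u + P^[n] G y :=
      iSup_congr fun z => by by_cases hz : z ∈ F x u <;> simp [hz, heq]
    have hge : P^[n + 1] G x ≤ P^[n + 2] G x := by
      rw [h2', hQu, hsup, Function.iterate_succ_apply' P n]
      exact (min_le_right _ _).trans (iInf_le _ u)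
    exact absurd hx (not_lt.2 hge)

end Aux

theorem stmt19 {X U : Type*} [Fintype X] [Fintype U] [Nonempty X] [Nonempty U]
    (F : X → U → Set X) (hF : ∀ x u, (F x u).Nonempty)
    (G : X → EReal) (c : ℝ) (hc : 0 < c)
    (g : X → X → U → EReal) (hg : ∀ x y u, (c : EReal) ≤ g x y u)
    (hGbdd : ∃ M : ℝ, ∀ x, G x < ⊤ → G x ≤ (M : EReal)) :
    {n : ℕ | (Pop F G g)^[n + 1] G ≠ (Pop F G g)^[n] G}.Finite ∧
    (Pop F G g)^[Fintype.card X + 1] G = (Pop F G g)^[Fintype.card X] G := by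
  set P := Pop F G g with hP
  -- chains of strict decreases
  have chain : ∀ k x, P^[k + 1] G x < P^[k] G x → ∃ z : ℕ → X, z 0 = x ∧
      (∀ i ≤ k, P^[k + 1 - i] G (z i) < P^[k - i] G (z i)) ∧
      (∀ i < k, (c : EReal) + P^[k - i] G (z (i + 1)) ≤ P^[k + 1 - i] G (z i)) := by
    intro k
    induction k with
    | zero =>
      intro x hx
      exact ⟨fun _ => x, rfl, fun i hi => by interval_cases i; simpa using hx,
        fun i hi => by omega⟩
    | succ k ih =>
      intro x hx
      obtain ⟨y, hy1, hy2⟩ := pop_step F G c g hg k x hx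
      obtain ⟨z', hz0, hz1, hz2⟩ := ih y hy1
      refine ⟨fun i => if i = 0 then x else z' (i - 1), rfl, ?_, ?_⟩
      · intro i hi
        rcases Nat.eq_zero_or_pos i with h0 | h0
        · subst h0; simpa using hx
        · obtain ⟨j, rfl⟩ := Nat.exists_eq_add_of_le h0
          have hj : j ≤ k := by omega
          have e1 : k + 1 + 1 - (1 + j) = k + 1 - j := by omega
          have e2 : k + 1 - (1 + j) = k - j := by omega
          simpa [e1, e2, Nat.add_comm 1 j] using hz1 j hj
      · intro i hi
        rcases Nat.eq_zero_or_pos i with h0 | h0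
        · subst h0
          show (c : EReal) + P^[k + 1] G (z' 0) ≤ P^[k + 1 + 1] G x
          rw [hz0]; exact hy2
        · obtain ⟨j, rfl⟩ := Nat.exists_eq_add_of_le h0
          have hj : j < k := by omega
          have e1 : k + 1 + 1 - (1 + j) = k + 1 - j := by omega
          have e2 : k + 1 - (1 + j) = k - j := by omega
          simpa [e1, e2, Nat.add_comm 1 j] using hz2 j hj
  -- accumulated cost along a chain
  have accum : ∀ k (z : ℕ → X),
      (∀ i < k, (c : EReal) + P^[k - i] G (z (i + 1)) ≤ P^[k + 1 - i] G (z i)) →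
      ∀ d i, i + d ≤ k →
        (((d : ℝ) * c : ℝ) : EReal) + P^[k + 1 - (i + d)] G (z (i + d)) ≤ P^[k + 1 - i] G (z i) := by
    intro k z hz d
    induction d with
    | zero => intro i _; simp
    | succ d ihd =>
      intro i hid
      have h1 : (c : EReal) + P^[k - (i + d)] G (z (i + d + 1)) ≤ P^[k + 1 - (i + d)] G (z (i + d)) :=
        hz (i + d) (by omega)
      have e1 : k - (i + d) = k + 1 - (i + d + 1) := by omega
      rw [e1] at h1
      have h2 : (((d : ℝ) * c : ℝ) : EReal) + ((c : EReal) + P^[k + 1 - (i + d + 1)] G (z (i + d + 1)))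
          ≤ (((d : ℝ) * c : ℝ) : EReal) + P^[k + 1 - (i + d)] G (z (i + d)) := add_le_add_right h1 _
      have h3 := h2.trans (ihd i (by omega))
      have e2 : ((((d + 1 : ℕ) : ℝ) * c : ℝ) : EReal)
          = (((d : ℝ) * c : ℝ) : EReal) + (c : EReal) := by
        rw [← EReal.coe_add]
        norm_cast
        push_cast
        ring
      calc ((((d + 1 : ℕ) : ℝ) * c : ℝ) : EReal) + P^[k + 1 - (i + (d + 1))] G (z (i + (d + 1)))
          = (((d : ℝ) * c : ℝ) : EReal)
            + ((c : EReal) + P^[k + 1 - (i + d + 1)] G (z (i + d + 1))) := by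
            rw [e2, add_assoc]
            rfl
        _ ≤ P^[k + 1 - i] G (z i) := h3
  -- no strict decrease at step card X + 1
  have main : P^[Fintype.card X + 1] G = P^[Fintype.card X] G := by
    set N := Fintype.card X with hN
    funext x
    by_contra hne
    have hlt : P^[N + 1] G x < P^[N] G x :=
      lt_of_le_of_ne (pop_iter_antitone_succ F G g N x) hne
    obtain ⟨z, hz0, hz1, hz2⟩ := chain N x hlt
    have hcard : Fintype.card X < Fintype.card (Fin (N + 1)) := by simp [hN]
    obtain ⟨i, j, hij, hzij⟩ :=
      Fintype.exists_ne_map_eq_of_card_lt (fun i : Fin (N + 1) => z i.1) hcard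
    have key : ∀ i j : Fin (N + 1), i < j → z i.1 = z j.1 → False := by
      intro i j hij hzij
      set d := j.1 - i.1 with hd
      have hd1 : 1 ≤ d := by have := Fin.lt_iff_val_lt_val.1 hij; omega
      have hjN : j.1 ≤ N := by omega
      have hij' : i.1 + d = j.1 := by have := Fin.lt_iff_val_lt_val.1 hij; omega
      have hacc := accum N z hz2 d i.1 (by omega)
      rw [hij'] at hacc
      -- a < b where a = value at i, b = value at j (same state)
      have ha : P^[N + 1 - i.1] G (z i.1) < P^[N - i.1] G (z i.1) := hz1 i.1 (by omega)
      have hmono : P^[N - i.1] G (z i.1) ≤ P^[N + 1 - j.1] G (z j.1) := by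
        rw [hzij]
        exact pop_iter_antitone F G g (by omega) (z j.1)
      have hab : P^[N + 1 - i.1] G (z i.1) < P^[N + 1 - j.1] G (z j.1) :=
        lt_of_lt_of_le ha hmono
      -- but b ≤ d*c + b ≤ a
      have hpos : (0 : ℝ) ≤ (d : ℝ) * c := by positivity
      have hbb : P^[N + 1 - j.1] G (z j.1)
          ≤ (((d : ℝ) * c : ℝ) : EReal) + P^[N + 1 - j.1] G (z j.1) := by
        calc P^[N + 1 - j.1] G (z j.1) = 0 + P^[N + 1 - j.1] G (z j.1) := (zero_add _).symm
          _ ≤ (((d : ℝ) * c : ℝ) : EReal) + P^[N + 1 - j.1] G (z j.1) := by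
              refine add_le_add_left ?_ _
              exact_mod_cast hpos
      exact absurd (hacc.trans_lt hab) (not_lt.2 hbb)
    rcases Ne.lt_or_gt hij with h | h
    · exact key i j h hzij
    · exact key j i h hzij.symm
  refine ⟨?_, main⟩
  -- once stable, stable forever
  have stab : ∀ n, Fintype.card X ≤ n → P^[n + 1] G = P^[n] G := by
    intro n hn
    have e1 : n + 1 = (n - Fintype.card X) + (Fintype.card X + 1) := by omega
    have e2 : n = (n - Fintype.card X) + Fintype.card X := by omega
    rw [e1, Function.iterate_add_apply, main, ← Function.iterate_add_apply, ← e2]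
  refine (Set.finite_Iio (Fintype.card X)).subset fun n hn => ?_
  simp only [Set.mem_setOf_eq] at hn
  by_contra hcon
  exact hn (stab n (by simpa using Set.notMem_Iio.mp hcon))
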